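/- arXiv:1912.11315 — 6 statements merged into one kernel-verified Lean document; each statement's English description precedes it below -/
import Mathlib

section
/- Let G be a finite abstract simplicial complex on a finite vertex set V, and for each simplex x ∈ G let p_x be a probability distribution on V supported on x (i.e. p_x(v) ≥ 0, p_x(v) = 0 for v ∉ x, and Σ_{v ∈ x} p_x(v) = 1). Define the curvature K(v) = Σ_{x ∈ G, v ∈ x} p_x(v) ω(x). Then the Gauss–Bonnet formula holds: Σ_{v ∈ V} K(v) = χ(G). -/
open Finset

/-- **Gauss–Bonnet for index expectation curvature on a simplicial complex.**
`G` is a finite abstract simplicial complex on the finite vertex set `V`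
(a collection of nonempty finite subsets closed under nonempty subsets, covering `V`),
`p x` is a probability distribution supported on the simplex `x`, and the curvature
`K v = ∑_{x ∈ G, v ∈ x} p x v · ω x` with `ω x = (-1)^(|x|-1)` sums to the
Euler characteristic `χ(G) = ∑_{x ∈ G} ω x`. -/
theorem gauss_bonnet_index_expectation
    {V : Type*} [Fintype V] [DecidableEq V]
    (G : Finset (Finset V))
    (hne : ∀ x ∈ G, x.Nonempty)
    (hclosed : ∀ x ∈ G, ∀ y : Finset V, y ⊆ x → y.Nonempty → y ∈ G)
    (hcover : ∀ v : V, ∃ x ∈ G, v ∈ x)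
    (p : Finset V → V → ℝ)
    (hp0 : ∀ x ∈ G, ∀ v : V, 0 ≤ p x v)
    (hsupp : ∀ x ∈ G, ∀ v : V, v ∉ x → p x v = 0)
    (hsum : ∀ x ∈ G, ∑ v ∈ x, p x v = 1) :
    ∑ v : V, ∑ x ∈ G.filter (fun x => v ∈ x), p x v * (-1 : ℝ) ^ (x.card - 1)
      = ∑ x ∈ G, (-1 : ℝ) ^ (x.card - 1) := by
  have h : ∀ v : V, ∑ x ∈ G.filter (fun x => v ∈ x), p x v * (-1 : ℝ) ^ (x.card - 1)
      = ∑ x ∈ G, (if v ∈ x then p x v else 0) * (-1 : ℝ) ^ (x.card - 1) := by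
    intro v
    rw [sum_filter]
    exact sum_congr rfl fun x hx => by split <;> simp
  simp_rw [h]
  rw [Finset.sum_comm]
  refine sum_congr rfl fun x hx => ?_
  rw [← sum_mul]
  have : ∑ v : V, (if v ∈ x then p x v else 0) = ∑ v ∈ x, p x v := by
    rw [sum_ite_mem, univ_inter]
  rw [this, hsum x hx, one_mul]
end

section
/- Let G = (V,E) be a finite tree (a finite connected acyclic simple graph) with |V| = n ≥ 1 vertices. Then there is exactly one curvature family on G with constant curvature, i.e. exactly one choice of values p_e(a), p_e(b) ≥ 0 with p_e(a) + p_e(b) = 1 for each edge e = {a,b} such that 1 - Σ_{e ∋ v} p_e(v) = 1/n for every vertex v. -/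
open Finset


namespace TreeCurvAux

open SimpleGraph

variable {V : Type*} [Fintype V] [DecidableEq V] (G : SimpleGraph V) [DecidableRel G.Adj]

/-- The graph `G` with all edges incident to `a` removed. -/
def off (a : V) : SimpleGraph V := G.deleteEdges (G.incidenceSet a)

variable {G}
set_option linter.unusedSectionVars false

lemma off_adj {a x y : V} : (off G a).Adj x y ↔ G.Adj x y ∧ x ≠ a ∧ y ≠ a := by
  simp only [off, deleteEdges_adj, incidenceSet, Set.mem_setOf_eq, mem_edgeSet, Sym2.mem_iff]
  constructor
  · rintro ⟨h, h2⟩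
    refine ⟨h, ?_, ?_⟩ <;> rintro rfl <;> exact h2 ⟨h, by simp⟩
  · rintro ⟨h, h1, h2⟩
    exact ⟨h, fun hc => by rcases hc.2 with rfl | rfl <;> simp_all⟩

lemma not_mem_support {a x y : V} (hx : x ≠ a) (W : (off G a).Walk x y) :
    a ∉ W.support := by
  induction W with
  | nil => simpa using hx.symm
  | cons h W ih =>
    rw [SimpleGraph.Walk.support_cons]
    have := (off_adj.mp h).2.2
    simp only [List.mem_cons]
    rintro (rfl | hmem)
    · exact hx rfl
    · exact ih this hmem

lemma walk_to_off {a x y : V} (W : G.Walk x y) (h : a ∉ W.support) :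
    (off G a).Reachable x y := by
  refine ⟨W.transfer _ fun e he => ?_⟩
  rw [off, SimpleGraph.edgeSet_deleteEdges]
  refine ⟨W.edges_subset_edgeSet he, fun hinc => ?_⟩
  have : a ∈ e := hinc.2
  induction e with
  | h u v =>
    rcases Sym2.mem_iff.mp this with rfl | rfl
    · exact h (W.fst_mem_support_of_mem_edges he)
    · exact h (W.snd_mem_support_of_mem_edges he)


open scoped Classical in
/-- Vertices reachable from `b` after removing all edges at `a`. -/
noncomputable def S (G : SimpleGraph V) (a b : V) : Finset V :=
  univ.filter (fun x => (off G a).Reachable b x)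

lemma mem_S {a b x : V} : x ∈ S G a b ↔ (off G a).Reachable b x := by
  simp [S]

lemma b_mem_S {a b : V} : b ∈ S G a b := mem_S.mpr (Reachable.refl b)

lemma a_not_mem_S {a b : V} (h : b ≠ a) : a ∉ S G a b := by
  intro hmem
  obtain ⟨W⟩ := mem_S.mp hmem
  exact not_mem_support h W W.end_mem_support

lemma off_edge {a : V} {e : Sym2 V} (he : e ∈ (off G a).edgeSet) :
    e ∈ G.edgeSet ∧ a ∉ e := by
  rw [off, edgeSet_deleteEdges] at he
  exact ⟨he.1, fun h => he.2 ⟨he.1, h⟩⟩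

lemma reachable_delete_of_off {a : V} {e : Sym2 V} (hae : a ∈ e) {x y : V}
    (h : (off G a).Reachable x y) : (G.deleteEdges {e}).Reachable x y := by
  obtain ⟨W⟩ := h
  refine ⟨W.transfer _ fun f hf => ?_⟩
  have hf' := off_edge (W.edges_subset_edgeSet hf)
  rw [edgeSet_deleteEdges]
  exact ⟨hf'.1, fun hc => hf'.2 (by rwa [Set.mem_singleton_iff.mp hc])⟩

variable (htree : G.IsTree)
include htree

lemma bridge {a b : V} (hab : G.Adj a b) :
    ¬ (G.deleteEdges {s(a, b)}).Reachable a b := by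
  have h := (isAcyclic_iff_forall_edge_isBridge.mp htree.IsAcyclic)
    ((SimpleGraph.mem_edgeSet _).mpr hab)
  exact isBridge_iff.mp h

lemma S_disjoint_neighbors {v w w' : V} (hw : G.Adj v w) (hw' : G.Adj v w')
    (hne : w ≠ w') : Disjoint (S G v w) (S G v w') := by
  rw [Finset.disjoint_left]
  intro x hx hx'
  have h1 : (off G v).Reachable w w' :=
    (mem_S.mp hx).trans (mem_S.mp hx').symm
  have h2 : (G.deleteEdges {s(v, w')}).Reachable w w' :=
    reachable_delete_of_off (by simp) h1
  have h3 : (G.deleteEdges {s(v, w')}).Adj v w := by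
    rw [deleteEdges_adj]
    refine ⟨hw, fun hc => hne (Sym2.congr_right.mp (Set.mem_singleton_iff.mp hc))⟩
  exact bridge htree hw' (h3.toWalk.reachable.trans h2)

lemma S_cover_v {v x : V} (hx : x ≠ v) : ∃ w, G.Adj v w ∧ x ∈ S G v w := by
  obtain ⟨W0⟩ := htree.isConnected.preconnected v x
  obtain ⟨W, hP⟩ : ∃ W : G.Walk v x, W.IsPath := ⟨W0.toPath.val, W0.toPath.prop⟩
  cases W with
  | nil => exact absurd rfl hx
  | cons h q =>
    rw [Walk.cons_isPath_iff] at hP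
    exact ⟨_, h, mem_S.mpr (walk_to_off q hP.2)⟩

lemma S_sdisj {a b : V} (hab : G.Adj a b) : Disjoint (S G a b) (S G b a) := by
  rw [Finset.disjoint_left]
  intro x hx hx'
  have h1 : (G.deleteEdges {s(a, b)}).Reachable b x :=
    reachable_delete_of_off (by simp) (mem_S.mp hx)
  have h2 : (G.deleteEdges {s(a, b)}).Reachable a x :=
    reachable_delete_of_off (by simp) (mem_S.mp hx')
  exact bridge htree hab (h2.trans h1.symm)

lemma S_cover {a b : V} (hab : G.Adj a b) (x : V) :
    x ∈ S G a b ∨ x ∈ S G b a := by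
  obtain ⟨W0⟩ := htree.isConnected.preconnected a x
  set P := W0.toPath with hPdef
  have hP := P.prop
  by_cases hb : b ∈ P.val.support
  · left
    set q := P.val.dropUntil b hb with hq
    have hspec := P.val.take_spec hb
    have hnodup := hP.support_nodup
    have ha : a ∉ q.support := by
      intro haq
      have h1 : a ∈ (P.val.takeUntil b hb).support := Walk.start_mem_support _
      have h2 : a ∈ q.support.tail := by
        have := q.support_eq_cons
        rw [this] at haq
        rcases List.mem_cons.mp haq with h | h
        · exact absurd h hab.ne
        · exact h
      rw [← hspec, Walk.support_append] at hnodup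
      exact (List.disjoint_of_nodup_append hnodup) h1 h2
    exact mem_S.mpr (walk_to_off q ha)
  · right
    exact mem_S.mpr (walk_to_off P.val hb)

lemma sum_card_S (v : V) :
    ∑ w ∈ G.neighborFinset v, (S G v w).card = Fintype.card V - 1 := by
  classical
  rw [← Finset.card_biUnion]
  · have : (G.neighborFinset v).biUnion (fun w => S G v w) = univ.erase v := by
      ext x
      simp only [Finset.mem_biUnion, Finset.mem_erase, Finset.mem_univ, and_true,
        mem_neighborFinset]
      constructor
      · rintro ⟨w, hvw, hx⟩
        intro hxv
        exact a_not_mem_S hvw.ne' (hxv ▸ hx)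
      · intro hx
        exact S_cover_v htree hx
    rw [this, Finset.card_erase_of_mem (Finset.mem_univ v), Finset.card_univ]
  · intro w hw w' hw' hne
    exact S_disjoint_neighbors htree (by simpa using hw) (by simpa using hw') hne

lemma card_S_add {a b : V} (hab : G.Adj a b) :
    (S G a b).card + (S G b a).card = Fintype.card V := by
  classical
  rw [← Finset.card_union_of_disjoint (S_sdisj htree hab)]
  have : S G a b ∪ S G b a = univ :=
    Finset.eq_univ_of_forall fun x => Finset.mem_union.mpr (S_cover htree hab x)
  rw [this, Finset.card_univ]

end TreeCurvAux

open TreeCurvAux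

/-- **Trees admit a unique constant curvature family.**
For a finite tree `G = (V,E)` with `n = |V| ≥ 1` there is exactly one curvature
family with constant curvature: exactly one choice of edge weights `p a b`
(the share of the edge `{a,b}` given to its endpoint `a`; we normalize `p a b = 0`
for non-adjacent pairs so that the family is determined by its values on edges)
with `p a b ≥ 0` and `p a b + p b a = 1` on each edge, such that
`K(v) = 1 - ∑_{w ~ v} p v w = 1/n` for every vertex `v`. -/
theorem tree_unique_constant_curvature
    {V : Type*} [Fintype V] [DecidableEq V]
    (G : SimpleGraph V) [DecidableRel G.Adj]
    (htree : G.IsTree) (n : ℕ) (hn : n = Fintype.card V) (hn1 : 1 ≤ n) :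
    ∃! p : V → V → ℝ,
      (∀ a b : V, ¬ G.Adj a b → p a b = 0) ∧
      (∀ a b : V, G.Adj a b → 0 ≤ p a b) ∧
      (∀ a b : V, G.Adj a b → p a b + p b a = 1) ∧
      (∀ v : V, (1 : ℝ) - ∑ w ∈ G.neighborFinset v, p v w = 1 / (n : ℝ)) := by
  have hn0 : (n : ℝ) ≠ 0 := Nat.cast_ne_zero.mpr (by omega)
  classical
  set p : V → V → ℝ := fun a b => if G.Adj a b then ((S G a b).card : ℝ) / n else 0 with hp
  have hpval : ∀ a b, G.Adj a b → p a b = ((S G a b).card : ℝ) / n := by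
    intro a b hab; simp only [hp, if_pos hab]
  have hp0 : ∀ a b, ¬ G.Adj a b → p a b = 0 := by
    intro a b hab; simp only [hp, if_neg hab]
  have hcurv : ∀ v : V, (1:ℝ) - ∑ w ∈ G.neighborFinset v, p v w = 1 / n := by
    intro v
    have hsum : ∑ w ∈ G.neighborFinset v, p v w
        = ((Fintype.card V - 1 : ℕ) : ℝ) / n := by
      rw [← sum_card_S htree v, Nat.cast_sum, Finset.sum_div]
      apply Finset.sum_congr rfl
      intro w hw
      exact hpval v w (by simpa using hw)
    rw [hsum, ← hn, Nat.cast_sub hn1]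
    push_cast
    field_simp
    ring
  have hsym : ∀ a b, G.Adj a b → p a b + p b a = 1 := by
    intro a b hab
    rw [hpval a b hab, hpval b a hab.symm, ← add_div, ← Nat.cast_add,
      card_S_add htree hab, ← hn]
    exact div_self hn0
  refine ⟨p, ⟨hp0, fun a b hab => by rw [hpval a b hab]; positivity, hsym, hcurv⟩, ?_⟩
  rintro q ⟨hq0, hq1, hq2, hq3⟩
  set D : V → V → ℝ := fun x y => q x y - p x y with hD
  have hD0 : ∀ x y, ¬ G.Adj x y → D x y = 0 := by
    intro x y h; simp only [hD, hq0 x y h, hp0 x y h, sub_zero]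
  have hDanti : ∀ x y, D x y = - D y x := by
    intro x y
    by_cases h : G.Adj x y
    · have h1 := hq2 x y h
      have h2 := hsym x y h
      simp only [hD]; linarith
    · rw [hD0 x y h, hD0 y x (fun hc => h hc.symm)]; ring
  have hrow : ∀ x, ∑ w ∈ univ, D x w = 0 := by
    intro x
    have e0 : ∑ w ∈ univ, D x w = ∑ w ∈ G.neighborFinset x, D x w := by
      refine (Finset.sum_subset (Finset.subset_univ _) ?_).symm
      intro w _ hw
      exact hD0 x w (by simpa using hw)
    have e1 := hq3 x
    have e2 := hcurv x
    simp only [hD] at e0 ⊢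
    rw [e0, Finset.sum_sub_distrib]
    linarith
  have key : ∀ a b, G.Adj a b → D b a = 0 := by
    intro a b hab
    set s := S G a b with hs
    have hA : ∑ x ∈ s, ∑ w ∈ univ, D x w = 0 :=
      Finset.sum_eq_zero fun x _ => hrow x
    have hB : ∑ x ∈ s, ∑ w ∈ s, D x w = 0 := by
      have h2 : (∑ x ∈ s, ∑ w ∈ s, D x w) = -(∑ x ∈ s, ∑ w ∈ s, D w x) := by
        rw [← Finset.sum_neg_distrib]
        apply Finset.sum_congr rfl; intro x _
        rw [← Finset.sum_neg_distrib]
        apply Finset.sum_congr rfl; intro w _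
        exact hDanti x w
      have h3 : (∑ x ∈ s, ∑ w ∈ s, D w x) = ∑ x ∈ s, ∑ w ∈ s, D x w :=
        Finset.sum_comm
      rw [h3] at h2
      linarith
    have claim1 : ∀ x ∈ s, ∀ w, w ∉ s → G.Adj x w → w = a := by
      intro x hx w hw hxw
      by_contra hwa
      apply hw
      have hxa : x ≠ a := by rintro rfl; exact a_not_mem_S hab.ne' hx
      exact mem_S.mpr ((mem_S.mp hx).trans (off_adj.mpr ⟨hxw, hxa, hwa⟩).reachable)
    have claim2 : ∀ x ∈ s, G.Adj x a → x = b := by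
      intro x hx hxa
      by_contra hxb
      apply bridge htree hab
      have e1 : (G.deleteEdges {s(a,b)}).Adj a x := by
        rw [SimpleGraph.deleteEdges_adj]
        exact ⟨hxa.symm, fun hc => hxb (Sym2.congr_right.mp (Set.mem_singleton_iff.mp hc))⟩
      have e2 : (G.deleteEdges {s(a,b)}).Reachable b x :=
        reachable_delete_of_off (by simp) (mem_S.mp hx)
      exact e1.reachable.trans e2.symm
    have hC : ∑ x ∈ s, ∑ w ∈ sᶜ, D x w = D b a := by
      calc ∑ x ∈ s, ∑ w ∈ sᶜ, D x w = ∑ w ∈ sᶜ, D b w := by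
            apply Finset.sum_eq_single_of_mem b b_mem_S
            intro x hx hxb
            apply Finset.sum_eq_zero
            intro w hw
            rw [Finset.mem_compl] at hw
            by_cases hxw : G.Adj x w
            · exact absurd (claim2 x hx (claim1 x hx w hw hxw ▸ hxw)) hxb
            · exact hD0 x w hxw
        _ = D b a := by
            apply Finset.sum_eq_single_of_mem a
              (Finset.mem_compl.mpr (a_not_mem_S hab.ne'))
            intro w hw hwa
            rw [Finset.mem_compl] at hw
            by_cases hbw : G.Adj b w
            · exact absurd (claim1 b b_mem_S w hw hbw) hwa
            · exact hD0 b w hbw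
    have hsplit : (∑ x ∈ s, ∑ w ∈ s, D x w) + (∑ x ∈ s, ∑ w ∈ sᶜ, D x w) = 0 := by
      rw [← Finset.sum_add_distrib, ← hA]
      exact Finset.sum_congr rfl fun x _ => Finset.sum_add_sum_compl s _
    rw [hB, hC] at hsplit
    linarith
  funext a b
  by_cases hab : G.Adj a b
  · have h1 := key a b hab
    have h2 := key b a hab.symm
    have := hDanti a b
    simp only [hD] at h1 h2 this ⊢
    linarith
  · rw [hq0 a b hab, hp0 a b hab]
end

section
/- There exists a finite connected simple graph G = (V,E) (containing triangles) with Euler characteristic χ(G) = 0 such that no curvature family on the Whitney complex of G has constant curvature. -/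
open Finset

open scoped Classical in
/-- The Whitney complex of a finite simple graph `G`: the finite set of
nonempty cliques (vertex sets of complete subgraphs) of `G`. -/
noncomputable def whitneySimplices {V : Type*} [Fintype V]
    (G : SimpleGraph V) : Finset (Finset V) :=
  Finset.univ.powerset.filter fun x => x.Nonempty ∧ ∀ a ∈ x, ∀ b ∈ x, a ≠ b → G.Adj a b

/-- The Euler characteristic `χ(G) = ∑_x (-1)^(|x|-1)` of the Whitney complex. -/
noncomputable def whitneyChi {V : Type*} [Fintype V] (G : SimpleGraph V) : ℝ :=
  ∑ x ∈ whitneySimplices G, (-1 : ℝ) ^ (x.card - 1)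

/-- A curvature family on the Whitney complex of `G`: each simplex `x` carries
a probability distribution `p x` on `V` supported on `x`. -/
def IsCurvFamily {V : Type*} [Fintype V] (G : SimpleGraph V)
    (p : Finset V → V → ℝ) : Prop :=
  ∀ x ∈ whitneySimplices G,
    (∀ v : V, 0 ≤ p x v) ∧ (∀ v : V, v ∉ x → p x v = 0) ∧ (∑ v ∈ x, p x v = 1)

open scoped Classical in
/-- The curvature `K_p(v) = ∑_{x ∋ v} p x v · (-1)^(|x|-1)` of a curvature family. -/
noncomputable def curvK {V : Type*} [Fintype V] (G : SimpleGraph V)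
    (p : Finset V → V → ℝ) (v : V) : ℝ :=
  ∑ x ∈ (whitneySimplices G).filter (fun x => v ∈ x), p x v * (-1 : ℝ) ^ (x.card - 1)

set_option maxRecDepth 10000

section Example11

def myAdjL : List (Fin 11 × Fin 11) :=
  [(0,1),(0,2),(0,3),(0,4),(1,2),(2,3),(3,4),(1,4),(1,5),(2,5),(3,5),(4,5),(0,6),(6,7),(6,8),(6,9),(7,10),(8,10),(9,10)]

lemma mysymm : ∀ a b : Fin 11, ((a,b) ∈ myAdjL ∨ (b,a) ∈ myAdjL) →
    ((b,a) ∈ myAdjL ∨ (a,b) ∈ myAdjL) := by decide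

lemma myirr : ∀ a : Fin 11, ¬((a,a) ∈ myAdjL ∨ (a,a) ∈ myAdjL) := by decide

def myG : SimpleGraph (Fin 11) where
  Adj a b := (a,b) ∈ myAdjL ∨ (b,a) ∈ myAdjL
  symm := ⟨fun a b h => mysymm a b h⟩
  loopless := ⟨fun a h => myirr a h⟩

instance : DecidableRel myG.Adj := fun a b => by
  change Decidable (_ ∨ _); infer_instance

def IsClq (x : Finset (Fin 11)) : Prop := ∀ a ∈ x, ∀ b ∈ x, a ≠ b → myG.Adj a b

instance : DecidablePred IsClq := fun x => by unfold IsClq; infer_instance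

def Llist : List (Finset (Fin 11)) := [{0}, {1}, {2}, {3}, {4}, {5}, {6}, {7}, {8}, {9}, {10}, {0,1}, {0,2}, {0,3}, {0,4}, {0,6}, {1,2}, {1,4}, {1,5}, {2,3}, {2,5}, {3,4}, {3,5}, {4,5}, {6,7}, {6,8}, {6,9}, {7,10}, {8,10}, {9,10}, {0,1,2}, {0,1,4}, {0,2,3}, {0,3,4}, {1,2,5}, {1,4,5}, {2,3,5}, {3,4,5}]

def enc (s : Finset (Fin 11)) : ℕ := ∑ v ∈ s, 2^(v:ℕ)

lemma encs : Llist.map enc = [1, 2, 4, 8, 16, 32, 64, 128, 256, 512, 1024, 3, 5, 9, 17, 65, 6, 18, 34, 12, 36, 24, 40, 48, 192, 320, 576, 1152, 1280, 1536, 7, 19, 13, 25, 38, 50, 44, 56] := by decide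

lemma Lnodup : Llist.Nodup := by
  have h : (Llist.map enc).Nodup := by rw [encs]; decide
  exact h.of_map

def L : Finset (Finset (Fin 11)) := ⟨(Llist : Multiset _), Multiset.coe_nodup.mpr Lnodup⟩

lemma mem_L {x : Finset (Fin 11)} : x ∈ L ↔ x ∈ Llist := by
  simp [L]

def fr : List (Fin 11) := List.finRange 11

lemma allFin {f : Fin 11 → Bool} (h : fr.all f = true) : ∀ a, f a = true :=
  fun a => List.all_eq_true.mp h a (List.mem_finRange a)

lemma impB {P Q : Prop} [Decidable P] [Decidable Q]
    (h : (!(decide P) || decide Q) = true) (hp : P) : Q := by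
  rcases Bool.or_eq_true _ _ |>.mp h with h' | h'
  · exact absurd (decide_eq_true hp) (by simpa using h')
  · exact of_decide_eq_true h'

lemma h1b : fr.all (fun a => decide (({a} : Finset (Fin 11)) ∈ Llist)) = true := by decide

lemma h2b : fr.all (fun a => fr.all (fun b =>
    !(decide (myG.Adj a b)) || decide (({a,b} : Finset (Fin 11)) ∈ Llist))) = true := by decide

lemma h3b : fr.all (fun a => fr.all (fun b => fr.all (fun c =>
    !(decide (myG.Adj a b) && decide (myG.Adj a c) && decide (myG.Adj b c))
      || decide (({a,b,c} : Finset (Fin 11)) ∈ Llist)))) = true := by decide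

lemma h4b : fr.all (fun a => fr.all (fun b => fr.all (fun c => fr.all (fun d =>
    !(decide (myG.Adj a b) && decide (myG.Adj a c) && decide (myG.Adj a d) &&
      decide (myG.Adj b c) && decide (myG.Adj b d) && decide (myG.Adj c d)))))) = true := by
  decide

lemma h1p (a : Fin 11) : ({a} : Finset (Fin 11)) ∈ Llist :=
  of_decide_eq_true (allFin h1b a)

lemma h2p {a b : Fin 11} (h : myG.Adj a b) : ({a,b} : Finset (Fin 11)) ∈ Llist :=
  impB (allFin (allFin h2b a) b) h

lemma h3p {a b c : Fin 11} (hab : myG.Adj a b) (hac : myG.Adj a c) (hbc : myG.Adj b c) :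
    ({a,b,c} : Finset (Fin 11)) ∈ Llist := by
  have h := allFin (allFin (allFin h3b a) b) c
  rcases (Bool.or_eq_true _ _).mp h with h2 | h2
  · exfalso
    simp [hab, hac, hbc] at h2
  · exact of_decide_eq_true h2

lemma h4p {a b c d : Fin 11} (hab : myG.Adj a b) (hac : myG.Adj a c) (had : myG.Adj a d)
    (hbc : myG.Adj b c) (hbd : myG.Adj b d) (hcd : myG.Adj c d) : False := by
  have h := allFin (allFin (allFin (allFin h4b a) b) c) d
  simp [hab, hac, had, hbc, hbd, hcd] at h

lemma LcliqueB : Llist.all (fun x => decide x.Nonempty && decide (IsClq x)) = true := by decide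

lemma Lmem_clique : ∀ x ∈ Llist, x.Nonempty ∧ IsClq x := by
  intro x hx
  have h := List.all_eq_true.mp LcliqueB x hx
  rw [Bool.and_eq_true] at h
  exact ⟨of_decide_eq_true h.1, of_decide_eq_true h.2⟩

lemma mem_whitney_iff (x : Finset (Fin 11)) :
    x ∈ whitneySimplices myG ↔ (x.Nonempty ∧ IsClq x) := by
  classical
  simp [whitneySimplices, IsClq]

lemma whitney_eq : whitneySimplices myG = L := by
  ext x
  rw [mem_whitney_iff, mem_L]
  constructor
  · rintro ⟨hne, hclq⟩
    rcases Nat.lt_or_ge x.card 4 with h4c | h4c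
    · have hpos : 0 < x.card := Finset.card_pos.mpr hne
      rcases (show x.card = 1 ∨ x.card = 2 ∨ x.card = 3 by omega) with h | h | h
      · obtain ⟨a, rfl⟩ := Finset.card_eq_one.mp h
        exact h1p a
      · obtain ⟨a, b, hab, rfl⟩ := Finset.card_eq_two.mp h
        exact h2p (hclq a (by simp) b (by simp) hab)
      · obtain ⟨a, b, c, hab, hac, hbc, rfl⟩ := Finset.card_eq_three.mp h
        exact h3p (hclq a (by simp) b (by simp) hab) (hclq a (by simp) c (by simp) hac)
          (hclq b (by simp) c (by simp) hbc)
    · exfalso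
      obtain ⟨y, hyx, hyc⟩ := Finset.exists_subset_card_eq h4c
      have hy0 : y.Nonempty := Finset.card_pos.mp (by omega)
      obtain ⟨a, ha⟩ := hy0
      have hec : (y.erase a).card = 3 := by rw [Finset.card_erase_of_mem ha, hyc]
      obtain ⟨b, c, d, hbc, hbd, hcd, he⟩ := Finset.card_eq_three.mp hec
      have hb : b ∈ y.erase a := by rw [he]; simp
      have hc : c ∈ y.erase a := by rw [he]; simp
      have hd : d ∈ y.erase a := by rw [he]; simp
      have hab : a ≠ b := fun h => (Finset.mem_erase.mp hb).1 h.symm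
      have hac : a ≠ c := fun h => (Finset.mem_erase.mp hc).1 h.symm
      have had : a ≠ d := fun h => (Finset.mem_erase.mp hd).1 h.symm
      have mb := hyx (Finset.mem_of_mem_erase hb)
      have mc := hyx (Finset.mem_of_mem_erase hc)
      have md := hyx (Finset.mem_of_mem_erase hd)
      have ma := hyx ha
      exact h4p (hclq a ma b mb hab) (hclq a ma c mc hac) (hclq a ma d md had)
        (hclq b mb c mc hbc) (hclq b mb d md hbd) (hclq c mc d md hcd)
  · intro hx
    exact Lmem_clique x hx

lemma sum_list (l : List (Finset (Fin 11))) (h : (l : Multiset (Finset (Fin 11))).Nodup)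
    (f : Finset (Fin 11) → ℝ) :
    (⟨(l : Multiset (Finset (Fin 11))), h⟩ : Finset (Finset (Fin 11))).sum f = (l.map f).sum := by
  simp [Finset.sum, Multiset.map_coe, Multiset.sum_coe]

lemma card0 : ({0} : Finset (Fin 11)).card = 1 := by decide
lemma card1 : ({1} : Finset (Fin 11)).card = 1 := by decide
lemma card2 : ({2} : Finset (Fin 11)).card = 1 := by decide
lemma card3 : ({3} : Finset (Fin 11)).card = 1 := by decide
lemma card4 : ({4} : Finset (Fin 11)).card = 1 := by decide
lemma card5 : ({5} : Finset (Fin 11)).card = 1 := by decide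
lemma card6 : ({6} : Finset (Fin 11)).card = 1 := by decide
lemma card7 : ({7} : Finset (Fin 11)).card = 1 := by decide
lemma card8 : ({8} : Finset (Fin 11)).card = 1 := by decide
lemma card9 : ({9} : Finset (Fin 11)).card = 1 := by decide
lemma card10 : ({10} : Finset (Fin 11)).card = 1 := by decide
lemma card11 : ({0,1} : Finset (Fin 11)).card = 2 := by decide
lemma card12 : ({0,2} : Finset (Fin 11)).card = 2 := by decide
lemma card13 : ({0,3} : Finset (Fin 11)).card = 2 := by decide
lemma card14 : ({0,4} : Finset (Fin 11)).card = 2 := by decide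
lemma card15 : ({0,6} : Finset (Fin 11)).card = 2 := by decide
lemma card16 : ({1,2} : Finset (Fin 11)).card = 2 := by decide
lemma card17 : ({1,4} : Finset (Fin 11)).card = 2 := by decide
lemma card18 : ({1,5} : Finset (Fin 11)).card = 2 := by decide
lemma card19 : ({2,3} : Finset (Fin 11)).card = 2 := by decide
lemma card20 : ({2,5} : Finset (Fin 11)).card = 2 := by decide
lemma card21 : ({3,4} : Finset (Fin 11)).card = 2 := by decide
lemma card22 : ({3,5} : Finset (Fin 11)).card = 2 := by decide
lemma card23 : ({4,5} : Finset (Fin 11)).card = 2 := by decide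
lemma card24 : ({6,7} : Finset (Fin 11)).card = 2 := by decide
lemma card25 : ({6,8} : Finset (Fin 11)).card = 2 := by decide
lemma card26 : ({6,9} : Finset (Fin 11)).card = 2 := by decide
lemma card27 : ({7,10} : Finset (Fin 11)).card = 2 := by decide
lemma card28 : ({8,10} : Finset (Fin 11)).card = 2 := by decide
lemma card29 : ({9,10} : Finset (Fin 11)).card = 2 := by decide
lemma card30 : ({0,1,2} : Finset (Fin 11)).card = 3 := by decide
lemma card31 : ({0,1,4} : Finset (Fin 11)).card = 3 := by decide
lemma card32 : ({0,2,3} : Finset (Fin 11)).card = 3 := by decide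
lemma card33 : ({0,3,4} : Finset (Fin 11)).card = 3 := by decide
lemma card34 : ({1,2,5} : Finset (Fin 11)).card = 3 := by decide
lemma card35 : ({1,4,5} : Finset (Fin 11)).card = 3 := by decide
lemma card36 : ({2,3,5} : Finset (Fin 11)).card = 3 := by decide
lemma card37 : ({3,4,5} : Finset (Fin 11)).card = 3 := by decide

lemma chi0 : whitneyChi myG = 0 := by
  rw [whitneyChi, whitney_eq]
  rw [show L = ⟨(Llist : Multiset _), Multiset.coe_nodup.mpr Lnodup⟩ from rfl]
  rw [sum_list]
  simp only [Llist, List.map_cons, List.map_nil, List.sum_cons, List.sum_nil,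
    card0, card1, card2, card3, card4, card5, card6, card7, card8, card9, card10, card11, card12, card13, card14, card15, card16, card17, card18, card19, card20, card21, card22, card23, card24, card25, card26, card27, card28, card29, card30, card31, card32, card33, card34, card35, card36, card37]
  norm_num


def F0list : List (Finset (Fin 11)) := [{0}, {0,1}, {0,2}, {0,3}, {0,4}, {0,6}, {0,1,2}, {0,1,4}, {0,2,3}, {0,3,4}]

lemma F0nodup : (F0list : Multiset (Finset (Fin 11))).Nodup := by
  rw [Multiset.coe_nodup]
  have h : (F0list.map enc).Nodup := by decide
  exact h.of_map

lemma filt0 : (whitneySimplices myG).filter (fun x => (0:Fin 11) ∈ x) =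
    ⟨(F0list : Multiset _), F0nodup⟩ := by
  rw [whitney_eq, Finset.filter_congr_decidable]
  decide


def F1list : List (Finset (Fin 11)) := [{1}, {0,1}, {1,2}, {1,4}, {1,5}, {0,1,2}, {0,1,4}, {1,2,5}, {1,4,5}]

lemma F1nodup : (F1list : Multiset (Finset (Fin 11))).Nodup := by
  rw [Multiset.coe_nodup]
  have h : (F1list.map enc).Nodup := by decide
  exact h.of_map

lemma filt1 : (whitneySimplices myG).filter (fun x => (1:Fin 11) ∈ x) =
    ⟨(F1list : Multiset _), F1nodup⟩ := by
  rw [whitney_eq, Finset.filter_congr_decidable]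
  decide


def F2list : List (Finset (Fin 11)) := [{2}, {0,2}, {1,2}, {2,3}, {2,5}, {0,1,2}, {0,2,3}, {1,2,5}, {2,3,5}]

lemma F2nodup : (F2list : Multiset (Finset (Fin 11))).Nodup := by
  rw [Multiset.coe_nodup]
  have h : (F2list.map enc).Nodup := by decide
  exact h.of_map

lemma filt2 : (whitneySimplices myG).filter (fun x => (2:Fin 11) ∈ x) =
    ⟨(F2list : Multiset _), F2nodup⟩ := by
  rw [whitney_eq, Finset.filter_congr_decidable]
  decide


def F3list : List (Finset (Fin 11)) := [{3}, {0,3}, {2,3}, {3,4}, {3,5}, {0,2,3}, {0,3,4}, {2,3,5}, {3,4,5}]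

lemma F3nodup : (F3list : Multiset (Finset (Fin 11))).Nodup := by
  rw [Multiset.coe_nodup]
  have h : (F3list.map enc).Nodup := by decide
  exact h.of_map

lemma filt3 : (whitneySimplices myG).filter (fun x => (3:Fin 11) ∈ x) =
    ⟨(F3list : Multiset _), F3nodup⟩ := by
  rw [whitney_eq, Finset.filter_congr_decidable]
  decide


def F4list : List (Finset (Fin 11)) := [{4}, {0,4}, {1,4}, {3,4}, {4,5}, {0,1,4}, {0,3,4}, {1,4,5}, {3,4,5}]

lemma F4nodup : (F4list : Multiset (Finset (Fin 11))).Nodup := by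
  rw [Multiset.coe_nodup]
  have h : (F4list.map enc).Nodup := by decide
  exact h.of_map

lemma filt4 : (whitneySimplices myG).filter (fun x => (4:Fin 11) ∈ x) =
    ⟨(F4list : Multiset _), F4nodup⟩ := by
  rw [whitney_eq, Finset.filter_congr_decidable]
  decide


def F5list : List (Finset (Fin 11)) := [{5}, {1,5}, {2,5}, {3,5}, {4,5}, {1,2,5}, {1,4,5}, {2,3,5}, {3,4,5}]

lemma F5nodup : (F5list : Multiset (Finset (Fin 11))).Nodup := by
  rw [Multiset.coe_nodup]
  have h : (F5list.map enc).Nodup := by decide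
  exact h.of_map

lemma filt5 : (whitneySimplices myG).filter (fun x => (5:Fin 11) ∈ x) =
    ⟨(F5list : Multiset _), F5nodup⟩ := by
  rw [whitney_eq, Finset.filter_congr_decidable]
  decide


lemma reach (w : Fin 11) : myG.Reachable 0 w := by
  have a01 : myG.Adj 0 1 := by decide
  have a02 : myG.Adj 0 2 := by decide
  have a03 : myG.Adj 0 3 := by decide
  have a04 : myG.Adj 0 4 := by decide
  have a15 : myG.Adj 1 5 := by decide
  have a06 : myG.Adj 0 6 := by decide
  have a67 : myG.Adj 6 7 := by decide
  have a68 : myG.Adj 6 8 := by decide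
  have a69 : myG.Adj 6 9 := by decide
  have a710 : myG.Adj 7 10 := by decide
  fin_cases w
  · rfl
  · exact a01.reachable
  · exact a02.reachable
  · exact a03.reachable
  · exact a04.reachable
  · exact a01.reachable.trans a15.reachable
  · exact a06.reachable
  · exact a06.reachable.trans a67.reachable
  · exact a06.reachable.trans a68.reachable
  · exact a06.reachable.trans a69.reachable
  · exact (a06.reachable.trans a67.reachable).trans a710.reachable

lemma myconn : myG.Connected := by
  rw [SimpleGraph.connected_iff_exists_forall_reachable]
  exact ⟨0, reach⟩

end Example11


/-- **There is a finite connected simple graph containing triangles, with Euler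
characteristic `χ(G) = 0`, admitting no curvature family of constant curvature
`χ(G)/|V|`.** -/
theorem exists_connected_graph_no_constant_curvature :
    ∃ (n : ℕ) (G : SimpleGraph (Fin n)),
      G.Connected ∧
      (∃ x ∈ whitneySimplices G, x.card = 3) ∧
      whitneyChi G = 0 ∧
      ¬ ∃ p : Finset (Fin n) → Fin n → ℝ, IsCurvFamily G p ∧
          ∀ v : Fin n, curvK G p v = whitneyChi G / (Fintype.card (Fin n) : ℝ) := by
  refine ⟨11, myG, myconn, ⟨({0,1,2} : Finset (Fin 11)), ?_, by decide⟩, chi0, ?_⟩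
  · rw [whitney_eq, mem_L]; decide
  · rintro ⟨p, hp, hK⟩
    have hz : ∀ v : Fin 11, curvK myG p v = 0 := by
      intro v
      rw [hK v, chi0]
      norm_num
    have e0 := hz 0
    rw [curvK, Finset.filter_congr_decidable, filt0, sum_list] at e0
    simp only [F0list, List.map_cons, List.map_nil, List.sum_cons, List.sum_nil,
      card0, card1, card2, card3, card4, card5, card6, card7, card8, card9, card10, card11, card12, card13, card14, card15, card16, card17, card18, card19, card20, card21, card22, card23, card24, card25, card26, card27, card28, card29, card30, card31, card32, card33, card34, card35, card36, card37] at e0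
    norm_num at e0
    have e1 := hz 1
    rw [curvK, Finset.filter_congr_decidable, filt1, sum_list] at e1
    simp only [F1list, List.map_cons, List.map_nil, List.sum_cons, List.sum_nil,
      card0, card1, card2, card3, card4, card5, card6, card7, card8, card9, card10, card11, card12, card13, card14, card15, card16, card17, card18, card19, card20, card21, card22, card23, card24, card25, card26, card27, card28, card29, card30, card31, card32, card33, card34, card35, card36, card37] at e1
    norm_num at e1
    have e2 := hz 2
    rw [curvK, Finset.filter_congr_decidable, filt2, sum_list] at e2
    simp only [F2list, List.map_cons, List.map_nil, List.sum_cons, List.sum_nil,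
      card0, card1, card2, card3, card4, card5, card6, card7, card8, card9, card10, card11, card12, card13, card14, card15, card16, card17, card18, card19, card20, card21, card22, card23, card24, card25, card26, card27, card28, card29, card30, card31, card32, card33, card34, card35, card36, card37] at e2
    norm_num at e2
    have e3 := hz 3
    rw [curvK, Finset.filter_congr_decidable, filt3, sum_list] at e3
    simp only [F3list, List.map_cons, List.map_nil, List.sum_cons, List.sum_nil,
      card0, card1, card2, card3, card4, card5, card6, card7, card8, card9, card10, card11, card12, card13, card14, card15, card16, card17, card18, card19, card20, card21, card22, card23, card24, card25, card26, card27, card28, card29, card30, card31, card32, card33, card34, card35, card36, card37] at e3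
    norm_num at e3
    have e4 := hz 4
    rw [curvK, Finset.filter_congr_decidable, filt4, sum_list] at e4
    simp only [F4list, List.map_cons, List.map_nil, List.sum_cons, List.sum_nil,
      card0, card1, card2, card3, card4, card5, card6, card7, card8, card9, card10, card11, card12, card13, card14, card15, card16, card17, card18, card19, card20, card21, card22, card23, card24, card25, card26, card27, card28, card29, card30, card31, card32, card33, card34, card35, card36, card37] at e4
    norm_num at e4
    have e5 := hz 5
    rw [curvK, Finset.filter_congr_decidable, filt5, sum_list] at e5
    simp only [F5list, List.map_cons, List.map_nil, List.sum_cons, List.sum_nil,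
      card0, card1, card2, card3, card4, card5, card6, card7, card8, card9, card10, card11, card12, card13, card14, card15, card16, card17, card18, card19, card20, card21, card22, card23, card24, card25, card26, card27, card28, card29, card30, card31, card32, card33, card34, card35, card36, card37] at e5
    norm_num at e5
    have m0 : ({0} : Finset (Fin 11)) ∈ whitneySimplices myG := by
      rw [whitney_eq, mem_L]; decide
    obtain ⟨nn0, -, s0⟩ := hp _ m0
    rw [Finset.sum_singleton] at s0
    have m1 : ({1} : Finset (Fin 11)) ∈ whitneySimplices myG := by
      rw [whitney_eq, mem_L]; decide
    obtain ⟨nn1, -, s1⟩ := hp _ m1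
    rw [Finset.sum_singleton] at s1
    have m2 : ({2} : Finset (Fin 11)) ∈ whitneySimplices myG := by
      rw [whitney_eq, mem_L]; decide
    obtain ⟨nn2, -, s2⟩ := hp _ m2
    rw [Finset.sum_singleton] at s2
    have m3 : ({3} : Finset (Fin 11)) ∈ whitneySimplices myG := by
      rw [whitney_eq, mem_L]; decide
    obtain ⟨nn3, -, s3⟩ := hp _ m3
    rw [Finset.sum_singleton] at s3
    have m4 : ({4} : Finset (Fin 11)) ∈ whitneySimplices myG := by
      rw [whitney_eq, mem_L]; decide
    obtain ⟨nn4, -, s4⟩ := hp _ m4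
    rw [Finset.sum_singleton] at s4
    have m5 : ({5} : Finset (Fin 11)) ∈ whitneySimplices myG := by
      rw [whitney_eq, mem_L]; decide
    obtain ⟨nn5, -, s5⟩ := hp _ m5
    rw [Finset.sum_singleton] at s5
    have m11 : ({0,1} : Finset (Fin 11)) ∈ whitneySimplices myG := by
      rw [whitney_eq, mem_L]; decide
    obtain ⟨nn11, -, s11⟩ := hp _ m11
    rw [Finset.sum_insert (by decide), Finset.sum_singleton] at s11
    have m12 : ({0,2} : Finset (Fin 11)) ∈ whitneySimplices myG := by
      rw [whitney_eq, mem_L]; decide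
    obtain ⟨nn12, -, s12⟩ := hp _ m12
    rw [Finset.sum_insert (by decide), Finset.sum_singleton] at s12
    have m13 : ({0,3} : Finset (Fin 11)) ∈ whitneySimplices myG := by
      rw [whitney_eq, mem_L]; decide
    obtain ⟨nn13, -, s13⟩ := hp _ m13
    rw [Finset.sum_insert (by decide), Finset.sum_singleton] at s13
    have m14 : ({0,4} : Finset (Fin 11)) ∈ whitneySimplices myG := by
      rw [whitney_eq, mem_L]; decide
    obtain ⟨nn14, -, s14⟩ := hp _ m14
    rw [Finset.sum_insert (by decide), Finset.sum_singleton] at s14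
    have m16 : ({1,2} : Finset (Fin 11)) ∈ whitneySimplices myG := by
      rw [whitney_eq, mem_L]; decide
    obtain ⟨nn16, -, s16⟩ := hp _ m16
    rw [Finset.sum_insert (by decide), Finset.sum_singleton] at s16
    have m17 : ({1,4} : Finset (Fin 11)) ∈ whitneySimplices myG := by
      rw [whitney_eq, mem_L]; decide
    obtain ⟨nn17, -, s17⟩ := hp _ m17
    rw [Finset.sum_insert (by decide), Finset.sum_singleton] at s17
    have m18 : ({1,5} : Finset (Fin 11)) ∈ whitneySimplices myG := by
      rw [whitney_eq, mem_L]; decide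
    obtain ⟨nn18, -, s18⟩ := hp _ m18
    rw [Finset.sum_insert (by decide), Finset.sum_singleton] at s18
    have m19 : ({2,3} : Finset (Fin 11)) ∈ whitneySimplices myG := by
      rw [whitney_eq, mem_L]; decide
    obtain ⟨nn19, -, s19⟩ := hp _ m19
    rw [Finset.sum_insert (by decide), Finset.sum_singleton] at s19
    have m20 : ({2,5} : Finset (Fin 11)) ∈ whitneySimplices myG := by
      rw [whitney_eq, mem_L]; decide
    obtain ⟨nn20, -, s20⟩ := hp _ m20
    rw [Finset.sum_insert (by decide), Finset.sum_singleton] at s20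
    have m21 : ({3,4} : Finset (Fin 11)) ∈ whitneySimplices myG := by
      rw [whitney_eq, mem_L]; decide
    obtain ⟨nn21, -, s21⟩ := hp _ m21
    rw [Finset.sum_insert (by decide), Finset.sum_singleton] at s21
    have m22 : ({3,5} : Finset (Fin 11)) ∈ whitneySimplices myG := by
      rw [whitney_eq, mem_L]; decide
    obtain ⟨nn22, -, s22⟩ := hp _ m22
    rw [Finset.sum_insert (by decide), Finset.sum_singleton] at s22
    have m23 : ({4,5} : Finset (Fin 11)) ∈ whitneySimplices myG := by
      rw [whitney_eq, mem_L]; decide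
    obtain ⟨nn23, -, s23⟩ := hp _ m23
    rw [Finset.sum_insert (by decide), Finset.sum_singleton] at s23
    have m30 : ({0,1,2} : Finset (Fin 11)) ∈ whitneySimplices myG := by
      rw [whitney_eq, mem_L]; decide
    obtain ⟨nn30, -, s30⟩ := hp _ m30
    rw [Finset.sum_insert (by decide), Finset.sum_insert (by decide), Finset.sum_singleton] at s30
    have m31 : ({0,1,4} : Finset (Fin 11)) ∈ whitneySimplices myG := by
      rw [whitney_eq, mem_L]; decide
    obtain ⟨nn31, -, s31⟩ := hp _ m31
    rw [Finset.sum_insert (by decide), Finset.sum_insert (by decide), Finset.sum_singleton] at s31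
    have m32 : ({0,2,3} : Finset (Fin 11)) ∈ whitneySimplices myG := by
      rw [whitney_eq, mem_L]; decide
    obtain ⟨nn32, -, s32⟩ := hp _ m32
    rw [Finset.sum_insert (by decide), Finset.sum_insert (by decide), Finset.sum_singleton] at s32
    have m33 : ({0,3,4} : Finset (Fin 11)) ∈ whitneySimplices myG := by
      rw [whitney_eq, mem_L]; decide
    obtain ⟨nn33, -, s33⟩ := hp _ m33
    rw [Finset.sum_insert (by decide), Finset.sum_insert (by decide), Finset.sum_singleton] at s33
    have m34 : ({1,2,5} : Finset (Fin 11)) ∈ whitneySimplices myG := by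
      rw [whitney_eq, mem_L]; decide
    obtain ⟨nn34, -, s34⟩ := hp _ m34
    rw [Finset.sum_insert (by decide), Finset.sum_insert (by decide), Finset.sum_singleton] at s34
    have m35 : ({1,4,5} : Finset (Fin 11)) ∈ whitneySimplices myG := by
      rw [whitney_eq, mem_L]; decide
    obtain ⟨nn35, -, s35⟩ := hp _ m35
    rw [Finset.sum_insert (by decide), Finset.sum_insert (by decide), Finset.sum_singleton] at s35
    have m36 : ({2,3,5} : Finset (Fin 11)) ∈ whitneySimplices myG := by
      rw [whitney_eq, mem_L]; decide
    obtain ⟨nn36, -, s36⟩ := hp _ m36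
    rw [Finset.sum_insert (by decide), Finset.sum_insert (by decide), Finset.sum_singleton] at s36
    have m37 : ({3,4,5} : Finset (Fin 11)) ∈ whitneySimplices myG := by
      rw [whitney_eq, mem_L]; decide
    obtain ⟨nn37, -, s37⟩ := hp _ m37
    rw [Finset.sum_insert (by decide), Finset.sum_insert (by decide), Finset.sum_singleton] at s37
    have m15 : ({0,6} : Finset (Fin 11)) ∈ whitneySimplices myG := by
      rw [whitney_eq, mem_L]; decide
    obtain ⟨nn15, -, s15⟩ := hp _ m15
    rw [Finset.sum_insert (by decide), Finset.sum_singleton] at s15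
    linarith [e0, e1, e2, e3, e4, e5, s0, s1, s2, s3, s4, s5, s11, s12, s13, s14, s16, s17, s18, s19, s20, s21, s22, s23, s30, s31, s32, s33, s34, s35, s36, s37, s15, nn15 6]
end

section
/- In the Erdős–Rényi random graph model on n labeled vertices where each of the C(n,2) possible edges is present independently with probability p ∈ [0,1], the expected value of the Euler characteristic χ of the Whitney complex of the random graph equals Σ_{k=1}^{n} (-1)^{k+1} C(n,k) p^{C(k,2)}. -/
open Finset

/-- The Euler characteristic of the Whitney complex of the graph on `Fin n` whose
edges are the elements of `S`: the alternating sum `∑_x (-1)^(|x|-1)` over the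
nonempty cliques `x` (equivalently `∑_{k ≥ 1} (-1)^(k+1) N_k`, where `N_k` is the
number of `k`-vertex cliques). -/
def chiOfEdges {n : ℕ} (S : Finset (Sym2 (Fin n))) : ℝ :=
  ∑ x ∈ Finset.univ.powerset.filter
      (fun x : Finset (Fin n) =>
        x.Nonempty ∧ ∀ a ∈ x, ∀ b ∈ x, a ≠ b → s(a, b) ∈ S),
    (-1 : ℝ) ^ (x.card - 1)

-- binomial identity: sum of weights = 1
lemma sum_weights {α : Type*} [DecidableEq α] (s : Finset α) (p : ℝ) :
    ∑ t ∈ s.powerset, p ^ t.card * (1 - p) ^ (s.card - t.card) = 1 := by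
  have h := Finset.prod_add (fun _ : α => p) (fun _ : α => (1 - p)) s
  simp only [prod_const] at h
  have h2 : ∀ t ∈ s.powerset, p ^ t.card * (1-p) ^ ((s \ t).card)
      = p ^ t.card * (1 - p) ^ (s.card - t.card) := by
    intro t ht
    rw [card_sdiff_of_subset (mem_powerset.mp ht)]
  rw [Finset.sum_congr rfl h2] at h
  rw [← h]
  simp

-- sum over supersets of T
lemma sum_supersets {α : Type*} [DecidableEq α] (E T : Finset α) (hT : T ⊆ E) (p : ℝ) :
    ∑ S ∈ E.powerset, (if T ⊆ S then p ^ S.card * (1 - p) ^ (E.card - S.card) else 0)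
      = p ^ T.card := by
  rw [← Finset.sum_filter]
  have key : ∑ S ∈ E.powerset.filter (fun S => T ⊆ S),
      p ^ S.card * (1 - p) ^ (E.card - S.card)
      = ∑ U ∈ (E \ T).powerset, p ^ (U ∪ T).card * (1 - p) ^ (E.card - (U ∪ T).card) := by
    refine (Finset.sum_nbij' (fun S => S \ T) (fun U => U ∪ T) ?_ ?_ ?_ ?_ ?_).symm.symm
    · intro S hS
      simp only [mem_filter, mem_powerset] at hS
      simp only [mem_powerset]
      exact sdiff_subset_sdiff hS.1 (Finset.Subset.refl T)
    · intro U hU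
      simp only [mem_powerset] at hU
      simp only [mem_filter, mem_powerset]
      constructor
      · exact union_subset (hU.trans sdiff_subset) hT
      · exact subset_union_right
    · intro S hS
      simp only [mem_filter, mem_powerset] at hS
      exact sdiff_union_of_subset hS.2
    · intro U hU
      simp only [mem_powerset] at hU
      apply union_sdiff_cancel_right
      exact Finset.disjoint_left.mpr (fun a ha => (Finset.mem_sdiff.mp (hU ha)).2)
    · intro S hS
      simp only [mem_filter, mem_powerset] at hS
      rw [sdiff_union_of_subset hS.2]
  rw [key]
  have h2 : ∀ U ∈ (E \ T).powerset,
      p ^ (U ∪ T).card * (1 - p) ^ (E.card - (U ∪ T).card)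
      = p ^ T.card * (p ^ U.card * (1 - p) ^ ((E \ T).card - U.card)) := by
    intro U hU
    simp only [mem_powerset] at hU
    have hdisj : Disjoint U T := Finset.disjoint_left.mpr
      (fun a ha => (Finset.mem_sdiff.mp (hU ha)).2)
    rw [card_union_of_disjoint hdisj, card_sdiff_of_subset hT]
    have hUE : U.card ≤ E.card - T.card := by
      have := Finset.card_le_card hU
      rwa [card_sdiff_of_subset hT] at this
    have : E.card - (U.card + T.card) = E.card - T.card - U.card := by omega
    rw [this, pow_add]
    ring
  rw [Finset.sum_congr rfl h2, ← Finset.mul_sum, sum_weights, mul_one]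

def edgesOf {n : ℕ} (x : Finset (Fin n)) : Finset (Sym2 (Fin n)) :=
  x.sym2.filter (fun e => ¬ e.IsDiag)

lemma card_edgesOf {n : ℕ} (x : Finset (Fin n)) : (edgesOf x).card = x.card.choose 2 := by
  have hdiag : (x.sym2.filter (fun e => e.IsDiag)) = x.image Sym2.diag := by
    ext e
    induction e using Sym2.ind with
    | _ a b =>
      simp only [mem_filter, mk_mem_sym2_iff, Sym2.mk_isDiag_iff, mem_image]
      constructor
      · rintro ⟨⟨ha, hb⟩, rfl⟩
        exact ⟨a, ha, rfl⟩
      · rintro ⟨c, hc, hcd⟩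
        rw [Sym2.diag] at hcd
        obtain ⟨rfl, rfl⟩ : c = a ∧ c = b := by
          constructor <;> · have := Sym2.eq_iff.mp hcd; tauto
        exact ⟨⟨hc, hc⟩, rfl⟩
  have hcard_diag : (x.sym2.filter (fun e => e.IsDiag)).card = x.card := by
    rw [hdiag, card_image_of_injective _ Sym2.diag_injective]
  have htot := Finset.card_filter_add_card_filter_not
    (s := x.sym2) (p := fun e => e.IsDiag)
  rw [hcard_diag, card_sym2] at htot
  have hchoose : (x.card + 1).choose 2 = x.card + x.card.choose 2 := by
    rw [Nat.choose_succ_succ, Nat.choose_one_right]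
  rw [edgesOf]
  omega

lemma edgesOf_subset {n : ℕ} (x : Finset (Fin n)) :
    edgesOf x ⊆ (⊤ : SimpleGraph (Fin n)).edgeFinset := by
  intro e he
  rw [edgesOf, mem_filter] at he
  rw [SimpleGraph.mem_edgeFinset, SimpleGraph.edgeSet_top, Set.mem_compl_iff, Sym2.mem_diagSet]
  exact he.2

lemma clique_iff {n : ℕ} (x : Finset (Fin n)) (S : Finset (Sym2 (Fin n))) :
    (∀ a ∈ x, ∀ b ∈ x, a ≠ b → s(a, b) ∈ S) ↔ edgesOf x ⊆ S := by
  constructor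
  · intro h e he
    induction e using Sym2.ind with
    | _ a b =>
      rw [edgesOf, mem_filter, mk_mem_sym2_iff, Sym2.mk_isDiag_iff] at he
      exact h a he.1.1 b he.1.2 he.2
  · intro h a ha b hb hab
    apply h
    rw [edgesOf, mem_filter, mk_mem_sym2_iff, Sym2.mk_isDiag_iff]
    exact ⟨⟨ha, hb⟩, hab⟩

/-- **Expected Euler characteristic in the Erdős–Rényi model `E(n,p)`.**
Each of the `C(n,2)` possible edges on `n` labeled vertices is present
independently with probability `p`, so a graph with edge set `S` has probability
`p^|S| (1-p)^(C(n,2)-|S|)`.  The expected Euler characteristic of the Whitney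
complex equals `∑_{k=1}^{n} (-1)^(k+1) C(n,k) p^(C(k,2))`. -/
theorem erdos_renyi_expected_euler_characteristic
    (n : ℕ) (p : ℝ) (hp : p ∈ Set.Icc (0 : ℝ) 1) :
    ∑ S ∈ ((⊤ : SimpleGraph (Fin n)).edgeFinset).powerset,
        p ^ S.card * (1 - p) ^ (((⊤ : SimpleGraph (Fin n)).edgeFinset).card - S.card)
          * chiOfEdges S
      = ∑ k ∈ Finset.Icc 1 n, (-1 : ℝ) ^ (k + 1) * (n.choose k : ℝ) * p ^ (k.choose 2) := by
  classical
  set E := (⊤ : SimpleGraph (Fin n)).edgeFinset with hE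
  have step1 : ∀ S : Finset (Sym2 (Fin n)),
      p ^ S.card * (1 - p) ^ (E.card - S.card) * chiOfEdges S
      = ∑ x ∈ (Finset.univ : Finset (Fin n)).powerset,
          (if x.Nonempty ∧ edgesOf x ⊆ S
            then p ^ S.card * (1 - p) ^ (E.card - S.card) * (-1 : ℝ) ^ (x.card - 1) else 0) := by
    intro S
    rw [chiOfEdges, Finset.sum_filter, Finset.mul_sum]
    refine Finset.sum_congr rfl fun x _ => ?_
    rw [mul_ite, mul_zero]
    congr 1
    rw [eq_iff_iff, and_congr_right_iff]
    intro _
    exact clique_iff x S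
  calc ∑ S ∈ E.powerset, p ^ S.card * (1 - p) ^ (E.card - S.card) * chiOfEdges S
      = ∑ S ∈ E.powerset, ∑ x ∈ (Finset.univ : Finset (Fin n)).powerset,
          (if x.Nonempty ∧ edgesOf x ⊆ S
            then p ^ S.card * (1 - p) ^ (E.card - S.card) * (-1 : ℝ) ^ (x.card - 1) else 0) :=
        Finset.sum_congr rfl fun S _ => step1 S
    _ = ∑ x ∈ (Finset.univ : Finset (Fin n)).powerset, ∑ S ∈ E.powerset,
          (if x.Nonempty ∧ edgesOf x ⊆ S
            then p ^ S.card * (1 - p) ^ (E.card - S.card) * (-1 : ℝ) ^ (x.card - 1) else 0) :=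
        Finset.sum_comm
    _ = ∑ x ∈ (Finset.univ : Finset (Fin n)).powerset,
          (if x.Nonempty then (-1 : ℝ) ^ (x.card - 1) * p ^ (x.card.choose 2) else 0) := by
        refine Finset.sum_congr rfl fun x _ => ?_
        by_cases hx : x.Nonempty
        · simp only [hx, true_and, if_true]
          have : ∀ S ∈ E.powerset,
              (if edgesOf x ⊆ S
                then p ^ S.card * (1 - p) ^ (E.card - S.card) * (-1 : ℝ) ^ (x.card - 1) else 0)
              = (-1 : ℝ) ^ (x.card - 1) *
                (if edgesOf x ⊆ S then p ^ S.card * (1 - p) ^ (E.card - S.card) else 0) := by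
            intro S _
            rw [mul_ite, mul_zero]
            congr 1
            ring
          rw [Finset.sum_congr rfl this, ← Finset.mul_sum,
            sum_supersets E (edgesOf x) (edgesOf_subset x) p, card_edgesOf]
        · simp [hx]
    _ = ∑ k ∈ Finset.Icc 1 n, (-1 : ℝ) ^ (k + 1) * (n.choose k : ℝ) * p ^ (k.choose 2) := by
        have hF : ∀ x : Finset (Fin n),
            (if x.Nonempty then (-1 : ℝ) ^ (x.card - 1) * p ^ (x.card.choose 2) else 0)
            = (fun k : ℕ => if k = 0 then 0 else (-1 : ℝ) ^ (k - 1) * p ^ (k.choose 2)) x.card := by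
          intro x
          by_cases hx : x.Nonempty
          · have hc : x.card ≠ 0 := by
              simpa [Finset.card_eq_zero] using Finset.nonempty_iff_ne_empty.mp hx
            simp [hx, hc]
          · simp [hx, Finset.not_nonempty_iff_eq_empty.mp hx]
        rw [Finset.sum_congr rfl (fun x _ => hF x), Finset.sum_powerset,
          Finset.sum_congr rfl (fun j _ => Finset.sum_powersetCard j Finset.univ
            (fun k : ℕ => if k = 0 then 0 else (-1 : ℝ) ^ (k - 1) * p ^ (k.choose 2)))]
        simp only [Finset.card_univ, Fintype.card_fin]
        have hsub : Finset.Icc 1 n ⊆ Finset.range (n + 1) := by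
          intro j hj
          rw [Finset.mem_Icc] at hj
          rw [Finset.mem_range]
          omega
        have hzero : ∀ j ∈ Finset.range (n + 1), j ∉ Finset.Icc 1 n →
            n.choose j • (if j = 0 then (0 : ℝ) else (-1 : ℝ) ^ (j - 1) * p ^ (j.choose 2)) = 0 := by
          intro j hj hj'
          rw [Finset.mem_range] at hj
          rw [Finset.mem_Icc] at hj'
          have : j = 0 := by omega
          simp [this]
        rw [← Finset.sum_subset hsub hzero]
        refine Finset.sum_congr rfl fun j hj => ?_
        rw [Finset.mem_Icc] at hj
        have hj1 : 1 ≤ j := hj.1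
        have hsign : (-1 : ℝ) ^ (j + 1) = (-1 : ℝ) ^ (j - 1) := by
          have : j + 1 = (j - 1) + 2 := by omega
          rw [this, pow_add]
          norm_num
        have : j ≠ 0 := by omega
        simp only [this, if_false, nsmul_eq_mul, hsign]
        ring
end

section
/- Let G and H be finite simple graphs on disjoint vertex sets and let G + H be their join (the disjoint union of G and H together with all edges between a vertex of G and a vertex of H). Then the Euler characteristics of the Whitney complexes satisfy χ(G + H) = χ(G) + χ(H) - χ(G)·χ(H). -/
open Finset

/-- The join `G + H` of two simple graphs on disjoint vertex sets: the disjoint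
union of `G` and `H` together with all edges between a vertex of `G` and a
vertex of `H`. -/
def graphJoin {U W : Type*} (G : SimpleGraph U) (H : SimpleGraph W) :
    SimpleGraph (U ⊕ W) where
  Adj x y :=
    match x, y with
    | Sum.inl a, Sum.inl b => G.Adj a b
    | Sum.inr a, Sum.inr b => H.Adj a b
    | Sum.inl _, Sum.inr _ => True
    | Sum.inr _, Sum.inl _ => True
  symm := by
    constructor
    rintro (a | a) (b | b) h
    · exact G.symm.symm _ _ h
    · trivial
    · trivial
    · exact H.symm.symm _ _ h
  loopless := by
    constructor
    rintro (a | a) h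
    · exact G.loopless.irrefl a h
    · exact H.loopless.irrefl a h

open scoped Classical in
/-- All cliques, including the empty one. -/
noncomputable def allCliques {V : Type*} [Fintype V] (G : SimpleGraph V) : Finset (Finset V) :=
  Finset.univ.powerset.filter fun x => ∀ a ∈ x, ∀ b ∈ x, a ≠ b → G.Adj a b

noncomputable def fullSum {V : Type*} [Fintype V] (G : SimpleGraph V) : ℝ :=
  ∑ x ∈ allCliques G, (-1 : ℝ) ^ x.card

lemma fullSum_eq {V : Type*} [Fintype V] (G : SimpleGraph V) :
    fullSum G = 1 - whitneyChi G := by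
  classical
  have hins : allCliques G = insert ∅ (whitneySimplices G) := by
    ext x
    simp only [allCliques, whitneySimplices, mem_insert, mem_filter, mem_powerset]
    constructor
    · rintro ⟨hx, hc⟩
      rcases x.eq_empty_or_nonempty with h | h
      · exact Or.inl h
      · exact Or.inr ⟨hx, h, hc⟩
    · rintro (rfl | ⟨hx, _, hc⟩)
      · simp
      · exact ⟨hx, hc⟩
  have hnm : (∅ : Finset V) ∉ whitneySimplices G := by
    simp [whitneySimplices]
  rw [fullSum, hins, Finset.sum_insert hnm]
  have : ∑ x ∈ whitneySimplices G, (-1 : ℝ) ^ x.card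
      = ∑ x ∈ whitneySimplices G, -((-1 : ℝ) ^ (x.card - 1)) := by
    apply Finset.sum_congr rfl
    intro x hx
    have hpos : 1 ≤ x.card := by
      have : x.Nonempty := (mem_filter.mp hx).2.1
      exact Finset.card_pos.mpr this
    have h1 : x.card = (x.card - 1) + 1 := by omega
    calc (-1 : ℝ) ^ x.card = (-1 : ℝ) ^ ((x.card - 1) + 1) := by rw [← h1]
      _ = -((-1 : ℝ) ^ (x.card - 1)) := by rw [pow_succ]; ring
  rw [this, Finset.sum_neg_distrib, ← whitneyChi]
  simp
  ring

lemma fullSum_graphJoin {U W : Type*} [Fintype U] [Fintype W]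
    (G : SimpleGraph U) (H : SimpleGraph W) :
    fullSum (graphJoin G H) = fullSum G * fullSum H := by
  classical
  rw [fullSum, fullSum, fullSum, Finset.sum_mul_sum, ← Finset.sum_product']
  apply Finset.sum_nbij' (i := fun x => (x.toLeft, x.toRight))
    (j := fun p => p.1.disjSum p.2)
  · intro x hx
    simp only [allCliques, mem_filter, mem_powerset, Finset.mem_product] at hx ⊢
    obtain ⟨-, hc⟩ := hx
    refine ⟨⟨subset_univ _, ?_⟩, subset_univ _, ?_⟩
    · intro a ha b hb hab
      exact hc _ (by simpa using ha) _ (by simpa using hb) (by simp [hab])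
    · intro a ha b hb hab
      exact hc _ (by simpa using ha) _ (by simpa using hb) (by simp [hab])
  · intro p hp
    simp only [allCliques, mem_filter, mem_powerset, Finset.mem_product] at hp ⊢
    obtain ⟨⟨-, hG⟩, -, hH⟩ := hp
    refine ⟨subset_univ _, ?_⟩
    rintro (a | a) ha (b | b) hb hab
    · exact hG a (by simpa using ha) b (by simpa using hb) (by simpa using hab)
    · trivial
    · trivial
    · exact hH a (by simpa using ha) b (by simpa using hb) (by simpa using hab)
  · intro x _
    exact toLeft_disjSum_toRight
  · intro p _
    simp
  · intro x _
    rw [← pow_add, card_toLeft_add_card_toRight]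

/-- **Euler characteristic of a join:**
`χ(G + H) = χ(G) + χ(H) - χ(G)·χ(H)`. -/
theorem whitneyChi_graphJoin {U W : Type*} [Fintype U] [Fintype W]
    (G : SimpleGraph U) (H : SimpleGraph W) :
    whitneyChi (graphJoin G H)
      = whitneyChi G + whitneyChi H - whitneyChi G * whitneyChi H := by
  have h := fullSum_graphJoin G H
  rw [fullSum_eq, fullSum_eq, fullSum_eq] at h
  nlinarith [h]
end

section
/- Let G = (V,E) be a finite simple graph and v ∈ V. The Levitt curvature satisfies K(v) = 1 + Σ_{k ≥ 0} (-1)^{k+1} v_k(S(v))/(k+2), where S(v) is the subgraph of G induced on the set of neighbors of v and v_k(S(v)) is the number of k-dimensional simplices in the Whitney complex of S(v), i.e. the number of cliques of S(v) with exactly k+1 vertices. -/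
open Finset

open scoped Classical in
/-- The Levitt curvature of `G` at the vertex `v`:
`K(v) = ∑_{x ∋ v} (-1)^(|x|-1)/|x|`, the sum over the cliques of `G`
containing `v` (the curvature coming from uniform distributions). -/
noncomputable def levittCurvature {V : Type*} [Fintype V]
    (G : SimpleGraph V) (v : V) : ℝ :=
  ∑ x ∈ (whitneySimplices G).filter (fun x => v ∈ x),
    (-1 : ℝ) ^ (x.card - 1) / (x.card : ℝ)

open scoped Classical in
/-- `v_k(S(v))`: the number of `k`-dimensional simplices of the Whitney complex
of the unit sphere `S(v)` (the subgraph induced on the neighbors of `v`), i.e.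
the number of cliques of `G` with `k+1` vertices all adjacent to `v`. -/
noncomputable def sphereFaceCount {V : Type*} [Fintype V]
    (G : SimpleGraph V) (v : V) (k : ℕ) : ℕ :=
  ((whitneySimplices G).filter
    (fun x => (∀ w ∈ x, G.Adj v w) ∧ x.card = k + 1)).card

private lemma mem_filter'' {α : Type*} {p : α → Prop} {h : DecidablePred p}
    {s : Finset α} {x : α} : x ∈ @Finset.filter α p h s ↔ x ∈ s ∧ p x := by
  letI := h; exact Finset.mem_filter

/-- **Levitt curvature via the unit sphere:**
`K(v) = 1 + ∑_{k ≥ 0} (-1)^(k+1) v_k(S(v))/(k+2)`, where `v_k(S(v))` is the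
number of `k`-dimensional simplices of the unit sphere `S(v)` of `v`. -/
theorem levittCurvature_eq_sphere_sum
    {V : Type*} [Fintype V] [DecidableEq V]
    (G : SimpleGraph V) (v : V) :
    levittCurvature G v
      = 1 + ∑ k ∈ Finset.range (Fintype.card V),
          (-1 : ℝ) ^ (k + 1) * (sphereFaceCount G v k : ℝ) / ((k : ℝ) + 2) := by
  classical
  have hmemW : ∀ x : Finset V, x ∈ whitneySimplices G ↔
      x.Nonempty ∧ ∀ a ∈ x, ∀ b ∈ x, a ≠ b → G.Adj a b := by
    intro x; simp [whitneySimplices]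
  rw [levittCurvature]
  set S := @Finset.filter (Finset V) (fun x => v ∈ x) (fun x => @Finset.decidableMem V (fun a b => Classical.propDecidable (a = b)) v x) (whitneySimplices G) with hS
  have hvS : ({v} : Finset V) ∈ S := by
    rw [hS, mem_filter'', hmemW]
    refine ⟨⟨⟨v, Finset.mem_singleton_self v⟩, ?_⟩, Finset.mem_singleton_self v⟩
    intro a ha b hb hab
    simp only [Finset.mem_singleton] at ha hb
    exact absurd (ha.trans hb.symm) hab
  rw [← Finset.add_sum_erase _ _ hvS]
  congr 1
  · simp
  set S' := S.erase {v} with hS'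
  have hcard2 : ∀ x ∈ S', 2 ≤ x.card := by
    intro x hx
    rcases Finset.mem_erase.mp hx with ⟨hne, hxS⟩
    rcases mem_filter''.mp hxS with ⟨_, hvx⟩
    by_contra h
    push_neg at h
    have h1 : 1 ≤ x.card := Finset.card_pos.mpr ⟨v, hvx⟩
    have : x.card = 1 := by omega
    rcases Finset.card_eq_one.mp this with ⟨a, rfl⟩
    simp only [Finset.mem_singleton] at hvx
    subst hvx
    exact hne rfl
  have hmaps : ∀ x ∈ S', x.card - 2 ∈ Finset.range (Fintype.card V) := by
    intro x hx
    have h2 := hcard2 x hx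
    have hle : x.card ≤ Fintype.card V := Finset.card_le_univ x
    rw [Finset.mem_range]; omega
  rw [← Finset.sum_fiberwise_of_maps_to hmaps
    (fun x => (-1 : ℝ) ^ (x.card - 1) / (x.card : ℝ))]
  refine Finset.sum_congr rfl (fun k _ => ?_)
  have hcardeq : ∀ x ∈ S'.filter (fun x => x.card - 2 = k), x.card = k + 2 := by
    intro x hx
    rcases mem_filter''.mp hx with ⟨hx', heq⟩
    have := hcard2 x hx'
    omega
  have hconst : ∀ x ∈ S'.filter (fun x => x.card - 2 = k),
      (-1 : ℝ) ^ (x.card - 1) / (x.card : ℝ)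
        = (-1 : ℝ) ^ (k + 1) / ((k : ℝ) + 2) := by
    intro x hx
    rw [hcardeq x hx]
    have h1 : k + 2 - 1 = k + 1 := by omega
    rw [h1]
    push_cast
    ring
  rw [Finset.sum_congr rfl hconst, Finset.sum_const, nsmul_eq_mul]
  have hcardbij : (S'.filter (fun x => x.card - 2 = k)).card
      = sphereFaceCount G v k := by
    rw [sphereFaceCount]
    apply Finset.card_bij (fun x _ => x.erase v)
    · intro x hx
      rcases mem_filter''.mp hx with ⟨hx', _⟩
      rcases Finset.mem_erase.mp hx' with ⟨hne, hxS⟩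
      rcases mem_filter''.mp hxS with ⟨hxW, hvx⟩
      rcases (hmemW x).mp hxW with ⟨hnon, hcl⟩
      have hadj : ∀ w ∈ x.erase v, G.Adj v w := by
        intro w hw
        rcases Finset.mem_erase.mp hw with ⟨hwv, hwx⟩
        exact (hcl v hvx w hwx (Ne.symm hwv))
      refine mem_filter''.mpr ⟨(hmemW _).mpr ⟨?_, ?_⟩, hadj, ?_⟩
      · rw [← Finset.card_pos, Finset.card_erase_of_mem hvx]
        have := hcardeq x hx; omega
      · intro a ha b hb hab
        exact hcl a (Finset.mem_of_mem_erase ha) b (Finset.mem_of_mem_erase hb) hab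
      · rw [Finset.card_erase_of_mem hvx, hcardeq x hx]; omega
    · intro x hx y hy hxy
      rcases mem_filter''.mp hx with ⟨hx', _⟩
      rcases mem_filter''.mp hy with ⟨hy', _⟩
      have hvx : v ∈ x := (mem_filter''.mp (Finset.mem_of_mem_erase hx')).2
      have hvy : v ∈ y := (mem_filter''.mp (Finset.mem_of_mem_erase hy')).2
      rw [← Finset.insert_erase hvx, ← Finset.insert_erase hvy, hxy]
    · intro y hy
      rcases mem_filter''.mp hy with ⟨hyW, hadj, hycard⟩
      rcases (hmemW y).mp hyW with ⟨hnon, hcl⟩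
      have hvy : v ∉ y := fun h => (G.loopless.irrefl v) (hadj v h)
      refine ⟨insert v y, ?_, ?_⟩
      · have hcardins : (insert v y).card = k + 2 := by
          rw [Finset.card_insert_of_notMem hvy, hycard]
        refine mem_filter''.mpr ⟨Finset.mem_erase.mpr ⟨?_, ?_⟩, by omega⟩
        · intro h
          have : (insert v y).card = 1 := by rw [h]; simp
          omega
        · refine mem_filter''.mpr ⟨(hmemW _).mpr ⟨⟨v, Finset.mem_insert_self v y⟩, ?_⟩,
            Finset.mem_insert_self v y⟩
          intro a ha b hb hab
          rcases Finset.mem_insert.mp ha with rfl | ha'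
          · rcases Finset.mem_insert.mp hb with rfl | hb'
            · exact absurd rfl hab
            · exact hadj b hb'
          · rcases Finset.mem_insert.mp hb with rfl | hb'
            · exact (hadj a ha').symm
            · exact hcl a ha' b hb' hab
      · rw [Finset.erase_insert hvy]
  rw [hcardbij]
  ring
end
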